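/- (Semi-Gyrocircle Gyrotriangle.) Let O ∈ 𝔹, 0 < R < s, and let A1, A2, A3 ∈ 𝔹 be pairwise distinct, not collinear in ℝⁿ, with |OA1| = |OA2| = |OA3| = R, and suppose O lies strictly between A1 and A2 on the Euclidean segment from A1 to A2 (so that A1A2 is a gyrodiameter of the gyrocircle). Let α1, α2, α3 be the gyroangles of gyrotriangle A1A2A3 at A1, A2, A3 and δ = π − α1 − α2 − α3 its defect. Then α3 = α1 + α2; equivalently, α3 + δ/2 = π/2. -/

import Mathlib

open RealInnerProductSpace

/-- Lorentz gamma factor of a vector `v` in the `s`-ball of `ℝⁿ`. -/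
noncomputable def egamma {n : ℕ} (s : ℝ) (v : EuclideanSpace ℝ (Fin n)) : ℝ :=
  1 / Real.sqrt (1 - ‖v‖ ^ 2 / s ^ 2)

/-- Einstein addition on the `s`-ball of `ℝⁿ`. -/
noncomputable def eadd {n : ℕ} (s : ℝ) (u v : EuclideanSpace ℝ (Fin n)) :
    EuclideanSpace ℝ (Fin n) :=
  (1 / (1 + ⟪u, v⟫ / s ^ 2)) •
    (u + (1 / egamma s u) • v + (egamma s u / (s ^ 2 * (1 + egamma s u))) • ⟪u, v⟫ • u)

/-- Gyroangle at vertex `X` between points `Y` and `Z`. -/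
noncomputable def gyroangle {n : ℕ} (s : ℝ) (X Y Z : EuclideanSpace ℝ (Fin n)) : ℝ :=
  Real.arccos ⟪‖eadd s (-X) Y‖⁻¹ • eadd s (-X) Y, ‖eadd s (-X) Z‖⁻¹ • eadd s (-X) Z⟫

/-- Gamma factor of a real gyrodistance `d`. -/
noncomputable def gammaR (s d : ℝ) : ℝ := 1 / Real.sqrt (1 - d ^ 2 / s ^ 2)

section Aux

variable {n : ℕ} {s : ℝ}

lemma egamma_neg (s : ℝ) (v : EuclideanSpace ℝ (Fin n)) : egamma s (-v) = egamma s v := by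
  simp [egamma]

lemma ball_pos (hs : 0 < s) {v : EuclideanSpace ℝ (Fin n)} (hv : ‖v‖ < s) :
    0 < 1 - ‖v‖ ^ 2 / s ^ 2 := by
  have h1 : ‖v‖ ^ 2 < s ^ 2 := by nlinarith [norm_nonneg v]
  have h2 : (0:ℝ) < s ^ 2 := by positivity
  rw [sub_pos, div_lt_one h2]; exact h1

lemma egamma_pos (hs : 0 < s) {v : EuclideanSpace ℝ (Fin n)} (hv : ‖v‖ < s) :
    0 < egamma s v := by
  have := ball_pos hs hv
  unfold egamma
  positivity

lemma egamma_sq (hs : 0 < s) {v : EuclideanSpace ℝ (Fin n)} (hv : ‖v‖ < s) :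
    (egamma s v) ^ 2 * (s ^ 2 - ‖v‖ ^ 2) = s ^ 2 := by
  have ht := ball_pos hs hv
  have hs2 : (s:ℝ) ^ 2 ≠ 0 := by positivity
  unfold egamma
  rw [div_pow, one_pow, Real.sq_sqrt ht.le]
  have h4 : ‖v‖ ^ 2 < s ^ 2 := by nlinarith [norm_nonneg v]
  have h3 : s ^ 2 - ‖v‖ ^ 2 ≠ 0 := by nlinarith
  field_simp

lemma inner_lt_s_sq (hs : 0 < s) {X Y : EuclideanSpace ℝ (Fin n)}
    (hX : ‖X‖ < s) (hY : ‖Y‖ < s) : ⟪X, Y⟫ < s ^ 2 := by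
  have h := real_inner_le_norm X Y
  nlinarith [norm_nonneg X, norm_nonneg Y]

end Aux

noncomputable def Gam {n : ℕ} (s : ℝ) (X Y : EuclideanSpace ℝ (Fin n)) : ℝ :=
  egamma s X * egamma s Y * (1 - ⟪X, Y⟫ / s ^ 2)

section Aux2

variable {n : ℕ} {s : ℝ}

lemma Gam_comm (s : ℝ) (X Y : EuclideanSpace ℝ (Fin n)) : Gam s X Y = Gam s Y X := by
  unfold Gam; rw [real_inner_comm]; ring

lemma Gam_pos (hs : 0 < s) {X Y : EuclideanSpace ℝ (Fin n)}
    (hX : ‖X‖ < s) (hY : ‖Y‖ < s) : 0 < Gam s X Y := by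
  have h1 := egamma_pos hs hX
  have h2 := egamma_pos hs hY
  have h3 := inner_lt_s_sq hs hX hY
  have hs2 : (0:ℝ) < s ^ 2 := by positivity
  have h4 : 0 < 1 - ⟪X, Y⟫ / s ^ 2 := by rw [sub_pos, div_lt_one hs2]; exact h3
  unfold Gam; positivity

lemma Gam_self (hs : 0 < s) {X : EuclideanSpace ℝ (Fin n)} (hX : ‖X‖ < s) :
    Gam s X X = 1 := by
  have h := egamma_sq hs hX
  have hs2 : (s:ℝ) ^ 2 ≠ 0 := by positivity
  unfold Gam
  rw [real_inner_self_eq_norm_sq, ← sq]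
  field_simp
  linarith

lemma eadd_decomp (hs : 0 < s) {X Y : EuclideanSpace ℝ (Fin n)}
    (hX : ‖X‖ < s) (hq : ⟪X, Y⟫ < s ^ 2) :
    eadd s (-X) Y = (egamma s X * (1 - ⟪X, Y⟫ / s ^ 2))⁻¹ •
      (Y - (egamma s X - (egamma s X) ^ 2 * ⟪X, Y⟫ / (s ^ 2 * (1 + egamma s X))) • X) := by
  have hg := egamma_pos hs hX
  have hg' : egamma s X ≠ 0 := hg.ne'
  have hg1 : (1:ℝ) + egamma s X ≠ 0 := by positivity
  have hs2 : (s:ℝ) ^ 2 ≠ 0 := by positivity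
  have hD0 : 0 < 1 - ⟪X, Y⟫ / s ^ 2 := by
    rw [sub_pos, div_lt_one (by positivity)]; exact hq
  have hD : (1:ℝ) - ⟪X, Y⟫ / s ^ 2 ≠ 0 := hD0.ne'
  obtain ⟨q, hqe⟩ : ∃ q : ℝ, ⟪X, Y⟫ = q := ⟨_, rfl⟩
  have hq' : q < s ^ 2 := hqe ▸ hq
  have hD2 : s ^ 2 - q ≠ 0 := ne_of_gt (by linarith)
  have key : (egamma s X * (1 - ⟪X, Y⟫ / s ^ 2)) • eadd s (-X) Y
      = Y - (egamma s X - (egamma s X) ^ 2 * ⟪X, Y⟫ / (s ^ 2 * (1 + egamma s X))) • X := by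
    unfold eadd
    rw [egamma_neg]
    simp only [inner_neg_left, neg_div, ← sub_eq_add_neg, hqe]
    match_scalars
    · field_simp
      ring
    · field_simp
  rw [← key, inv_smul_smul₀ (by positivity)]

end Aux2

section Aux3

variable {n : ℕ} {s : ℝ}

lemma mu_self (hs : 0 < s) {X : EuclideanSpace ℝ (Fin n)} (hX : ‖X‖ < s) :
    egamma s X - (egamma s X) ^ 2 * ⟪X, X⟫ / (s ^ 2 * (1 + egamma s X)) = 1 := by
  have hg := egamma_pos hs hX
  have hg1 : (1:ℝ) + egamma s X ≠ 0 := by positivity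
  have hs2 : (s:ℝ) ^ 2 ≠ 0 := by positivity
  have h := egamma_sq hs hX
  rw [real_inner_self_eq_norm_sq]
  field_simp
  nlinarith [h]

lemma eadd_neg_self (hs : 0 < s) {X : EuclideanSpace ℝ (Fin n)} (hX : ‖X‖ < s) :
    eadd s (-X) X = 0 := by
  rw [eadd_decomp hs hX (inner_lt_s_sq hs hX hX), mu_self hs hX, one_smul, sub_self, smul_zero]

set_option maxHeartbeats 1600000 in
lemma inner_eadd_eadd (hs : 0 < s) {X Y Z : EuclideanSpace ℝ (Fin n)}
    (hX : ‖X‖ < s) (hY : ‖Y‖ < s) (hZ : ‖Z‖ < s) :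
    ⟪eadd s (-X) Y, eadd s (-X) Z⟫ * (Gam s X Y * Gam s X Z)
      = s ^ 2 * (Gam s X Y * Gam s X Z - Gam s Y Z) := by
  have hg := egamma_pos hs hX
  have hgY := egamma_pos hs hY
  have hgZ := egamma_pos hs hZ
  have hg' : egamma s X ≠ 0 := hg.ne'
  have hg1 : (1:ℝ) + egamma s X ≠ 0 := by positivity
  have hs2 : (s:ℝ) ^ 2 ≠ 0 := by positivity
  have hqY := inner_lt_s_sq hs hX hY
  have hqZ := inner_lt_s_sq hs hX hZ
  have hDY : s ^ 2 - ⟪X, Y⟫ ≠ 0 := ne_of_gt (by linarith)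
  have hDZ : s ^ 2 - ⟪X, Z⟫ ≠ 0 := ne_of_gt (by linarith)
  have hnX : ‖X‖ ^ 2 = (s ^ 2 * (egamma s X) ^ 2 - s ^ 2) / (egamma s X) ^ 2 := by
    have h := egamma_sq hs hX
    field_simp
    nlinarith [h]
  rw [eadd_decomp hs hX hqY, eadd_decomp hs hX hqZ]
  simp only [real_inner_smul_left, real_inner_smul_right, inner_sub_left, inner_sub_right,
    real_inner_self_eq_norm_sq]
  unfold Gam
  obtain ⟨g, hge⟩ : ∃ g : ℝ, egamma s X = g := ⟨_, rfl⟩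
  obtain ⟨gY, hgYe⟩ : ∃ g : ℝ, egamma s Y = g := ⟨_, rfl⟩
  obtain ⟨gZ, hgZe⟩ : ∃ g : ℝ, egamma s Z = g := ⟨_, rfl⟩
  obtain ⟨a, hae⟩ : ∃ a : ℝ, ⟪X, Y⟫ = a := ⟨_, rfl⟩
  obtain ⟨b, hbe⟩ : ∃ b : ℝ, ⟪X, Z⟫ = b := ⟨_, rfl⟩
  obtain ⟨c, hce⟩ : ∃ c : ℝ, ⟪Y, Z⟫ = c := ⟨_, rfl⟩
  rw [hge] at hg' hg1 hnX
  rw [hae] at hDY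
  rw [hbe] at hDZ
  simp only [real_inner_comm X Y, hnX, hge, hgYe, hgZe, hae, hbe, hce]
  field_simp
  ring

end Aux3

section Aux4

variable {n : ℕ} {s : ℝ}

lemma norm_eadd_sq (hs : 0 < s) {X Y : EuclideanSpace ℝ (Fin n)}
    (hX : ‖X‖ < s) (hY : ‖Y‖ < s) :
    ‖eadd s (-X) Y‖ ^ 2 * (Gam s X Y) ^ 2 = s ^ 2 * ((Gam s X Y) ^ 2 - 1) := by
  have h := inner_eadd_eadd hs hX hY hY
  rw [real_inner_self_eq_norm_sq, Gam_self hs hY] at h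
  linear_combination h

lemma norm_eadd_symm (hs : 0 < s) {X Y : EuclideanSpace ℝ (Fin n)}
    (hX : ‖X‖ < s) (hY : ‖Y‖ < s) :
    ‖eadd s (-X) Y‖ = ‖eadd s (-Y) X‖ := by
  have h1 := norm_eadd_sq hs hX hY
  have h2 := norm_eadd_sq hs hY hX
  rw [Gam_comm s Y X] at h2
  have hG : (0:ℝ) < Gam s X Y := Gam_pos hs hX hY
  have hsq : ‖eadd s (-X) Y‖ ^ 2 = ‖eadd s (-Y) X‖ ^ 2 := by
    have hG2 : (Gam s X Y) ^ 2 ≠ 0 := by positivity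
    exact mul_right_cancel₀ hG2 (h1.trans h2.symm)
  calc ‖eadd s (-X) Y‖ = Real.sqrt (‖eadd s (-X) Y‖ ^ 2) := (Real.sqrt_sq (norm_nonneg _)).symm
    _ = Real.sqrt (‖eadd s (-Y) X‖ ^ 2) := by rw [hsq]
    _ = ‖eadd s (-Y) X‖ := Real.sqrt_sq (norm_nonneg _)

lemma Gam_eq_of_norm_eq (hs : 0 < s) {X Y Z W : EuclideanSpace ℝ (Fin n)}
    (hX : ‖X‖ < s) (hY : ‖Y‖ < s) (hZ : ‖Z‖ < s) (hW : ‖W‖ < s)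
    (h : ‖eadd s (-X) Y‖ = ‖eadd s (-Z) W‖) : Gam s X Y = Gam s Z W := by
  have h1 := norm_eadd_sq hs hX hY
  have h2 := norm_eadd_sq hs hZ hW
  rw [h] at h1
  have hG1 : (0:ℝ) < Gam s X Y := Gam_pos hs hX hY
  have hG2 : (0:ℝ) < Gam s Z W := Gam_pos hs hZ hW
  have hsq : (Gam s X Y) ^ 2 = (Gam s Z W) ^ 2 := by
    have e1 : (Gam s X Y) ^ 2 * (s ^ 2 - ‖eadd s (-Z) W‖ ^ 2) = s ^ 2 := by linear_combination -h1
    have e2 : (Gam s Z W) ^ 2 * (s ^ 2 - ‖eadd s (-Z) W‖ ^ 2) = s ^ 2 := by linear_combination -h2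
    have hpos : 0 < s ^ 2 - ‖eadd s (-Z) W‖ ^ 2 := by nlinarith [e1, sq_nonneg (Gam s X Y), hG1]
    exact mul_right_cancel₀ hpos.ne' (e1.trans e2.symm)
  calc Gam s X Y = Real.sqrt ((Gam s X Y) ^ 2) := (Real.sqrt_sq hG1.le).symm
    _ = Real.sqrt ((Gam s Z W) ^ 2) := by rw [hsq]
    _ = Gam s Z W := Real.sqrt_sq hG2.le

lemma eadd_ne_zero (hs : 0 < s) {X Y : EuclideanSpace ℝ (Fin n)}
    (hX : ‖X‖ < s) (hY : ‖Y‖ < s) (hne : X ≠ Y) : eadd s (-X) Y ≠ 0 := by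
  intro h0
  apply hne
  have hq := inner_lt_s_sq hs hX hY
  have hg := egamma_pos hs hX
  have hg1 : (1:ℝ) + egamma s X ≠ 0 := by positivity
  have hs2 : (s:ℝ) ^ 2 ≠ 0 := by positivity
  have hD0 : 0 < 1 - ⟪X, Y⟫ / s ^ 2 := by
    rw [sub_pos, div_lt_one (by positivity)]; exact hq
  rw [eadd_decomp hs hX hq] at h0
  have hc : (egamma s X * (1 - ⟪X, Y⟫ / s ^ 2))⁻¹ ≠ 0 :=
    (inv_pos.mpr (mul_pos hg hD0)).ne'
  have h1 : Y - (egamma s X - (egamma s X) ^ 2 * ⟪X, Y⟫ / (s ^ 2 * (1 + egamma s X))) • X = 0 :=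
    by_contra fun hne2 => hne2 (by
      have := smul_eq_zero.mp h0
      rcases this with h | h
      · exact absurd h hc
      · exact h)
  have hY2 : Y = (egamma s X - (egamma s X) ^ 2 * ⟪X, Y⟫ / (s ^ 2 * (1 + egamma s X))) • X := by
    rwa [sub_eq_zero] at h1
  -- take inner with X
  have hin : ⟪X, Y⟫ = (egamma s X - (egamma s X) ^ 2 * ⟪X, Y⟫ / (s ^ 2 * (1 + egamma s X))) * ‖X‖ ^ 2 := by
    calc ⟪X, Y⟫ = ⟪X, (egamma s X - (egamma s X) ^ 2 * ⟪X, Y⟫ / (s ^ 2 * (1 + egamma s X))) • X⟫ := by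
          rw [← hY2]
      _ = (egamma s X - (egamma s X) ^ 2 * ⟪X, Y⟫ / (s ^ 2 * (1 + egamma s X))) * ‖X‖ ^ 2 := by
          rw [real_inner_smul_right, real_inner_self_eq_norm_sq]
  have hmu : (egamma s X - (egamma s X) ^ 2 * ⟪X, Y⟫ / (s ^ 2 * (1 + egamma s X))) = 1 := by
    have hgsq := egamma_sq hs hX
    obtain ⟨q, hqe⟩ : ∃ q : ℝ, ⟪X, Y⟫ = q := ⟨_, rfl⟩
    obtain ⟨m, hme⟩ : ∃ m : ℝ, ‖X‖ ^ 2 = m := ⟨_, rfl⟩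
    obtain ⟨g, hge⟩ : ∃ g : ℝ, egamma s X = g := ⟨_, rfl⟩
    rw [hge, hqe]
    rw [hge, hqe, hme] at hin
    rw [hge, hme] at hgsq
    rw [hge] at hg
    have hT : (0:ℝ) < s ^ 2 * (1 + g) := by positivity
    have hgm : g ^ 2 * m = s ^ 2 * (g - 1) * (g + 1) := by linear_combination -hgsq
    have hinT : q * (s ^ 2 * (1 + g)) = (g * (s ^ 2 * (1 + g)) - g ^ 2 * q) * m := by
      field_simp at hin
      linear_combination hin
    have hE : g ^ 2 * q * (s ^ 2 * (1 + g))
        = (g * (s ^ 2 * (1 + g)) - g ^ 2 * q) * (s ^ 2 * (g ^ 2 - 1)) := by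
      linear_combination (g ^ 2) * hinT + (g * (s ^ 2 * (1 + g)) - g ^ 2 * q) * hgm
    have hu : (g ^ 2 * q) * (g * (s ^ 2 * (1 + g))) = (s ^ 2 * (g ^ 2 - 1)) * (g * (s ^ 2 * (1 + g))) := by
      linear_combination hE
    have hq' : g ^ 2 * q = s ^ 2 * (g ^ 2 - 1) := mul_right_cancel₀ (by positivity) hu
    field_simp
    linear_combination -hq'
  rw [hmu, one_smul] at hY2
  exact hY2.symm
end Aux4

section Aux5

variable {n : ℕ} {s : ℝ}

lemma eadd_combo (hs : 0 < s) {X Y Z : EuclideanSpace ℝ (Fin n)} (t : ℝ)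
    (hX : ‖X‖ < s) (hqY : ⟪X, Y⟫ < s ^ 2) (hqZ : ⟪X, Z⟫ < s ^ 2)
    (hqP : ⟪X, Y + t • (Z - Y)⟫ < s ^ 2) :
    eadd s (-X) (Y + t • (Z - Y)) =
      (((1 - t) * (1 - ⟪X, Y⟫ / s ^ 2)) / (1 - ⟪X, Y + t • (Z - Y)⟫ / s ^ 2)) • eadd s (-X) Y
      + ((t * (1 - ⟪X, Z⟫ / s ^ 2)) / (1 - ⟪X, Y + t • (Z - Y)⟫ / s ^ 2)) • eadd s (-X) Z := by
  have hg := egamma_pos hs hX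
  have hg1 : (0:ℝ) < 1 + egamma s X := by positivity
  have hs2 : (s:ℝ) ^ 2 ≠ 0 := by positivity
  have hP : ⟪X, Y + t • (Z - Y)⟫ = (1 - t) * ⟪X, Y⟫ + t * ⟪X, Z⟫ := by
    rw [inner_add_right, inner_smul_right, inner_sub_right]
    ring
  have hDY : (0:ℝ) < 1 - ⟪X, Y⟫ / s ^ 2 := by
    rw [sub_pos, div_lt_one (by positivity)]; exact hqY
  have hDZ : (0:ℝ) < 1 - ⟪X, Z⟫ / s ^ 2 := by
    rw [sub_pos, div_lt_one (by positivity)]; exact hqZ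
  have hDP : (0:ℝ) < 1 - ⟪X, Y + t • (Z - Y)⟫ / s ^ 2 := by
    rw [sub_pos, div_lt_one (by positivity)]; exact hqP
  rw [eadd_decomp hs hX hqY, eadd_decomp hs hX hqZ, eadd_decomp hs hX hqP]
  rw [hP] at hDP ⊢
  obtain ⟨g, hge⟩ : ∃ g : ℝ, egamma s X = g := ⟨_, rfl⟩
  obtain ⟨a, hae⟩ : ∃ a : ℝ, ⟪X, Y⟫ = a := ⟨_, rfl⟩
  obtain ⟨b, hbe⟩ : ∃ b : ℝ, ⟪X, Z⟫ = b := ⟨_, rfl⟩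
  rw [hge] at hg hg1
  rw [hae] at hDY
  rw [hbe] at hDZ
  rw [hae, hbe] at hDP
  rw [hge, hae, hbe]
  have hqP' : (1 - t) * a + t * b < s ^ 2 := by
    rw [hP] at hqP; rw [hae, hbe] at hqP; exact hqP
  have hA : s ^ 2 - a ≠ 0 := ne_of_gt (by nlinarith [hqY, hae])
  have hB : s ^ 2 - b ≠ 0 := ne_of_gt (by nlinarith [hqZ, hbe])
  have hC : s ^ 2 - ((1 - t) * a + t * b) ≠ 0 := ne_of_gt (by linarith)
  have h1 : g * (1 - a / s ^ 2) ≠ 0 := by positivity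
  have h2 : g * (1 - b / s ^ 2) ≠ 0 := by positivity
  have h3 : g * (1 - ((1 - t) * a + t * b) / s ^ 2) ≠ 0 := by positivity
  have h4 : (1:ℝ) - ((1 - t) * a + t * b) / s ^ 2 ≠ 0 := hDP.ne'
  have h5 : (1:ℝ) - a / s ^ 2 ≠ 0 := hDY.ne'
  have h6 : (1:ℝ) - b / s ^ 2 ≠ 0 := hDZ.ne'
  match_scalars
  · field_simp
    ring
  · field_simp
  · field_simp
    ring

lemma gyroangle_comm (s : ℝ) (X Y Z : EuclideanSpace ℝ (Fin n)) :
    gyroangle s X Y Z = gyroangle s X Z Y := by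
  unfold gyroangle; rw [real_inner_comm]

lemma gyroangle_eq (s : ℝ) (X Y Z : EuclideanSpace ℝ (Fin n)) :
    gyroangle s X Y Z = Real.arccos (⟪eadd s (-X) Y, eadd s (-X) Z⟫
      / (‖eadd s (-X) Y‖ * ‖eadd s (-X) Z‖)) := by
  unfold gyroangle
  rw [real_inner_smul_left, real_inner_smul_right]
  congr 1
  ring

lemma smul_norm_inv_smul {c : ℝ} (hc : 0 < c) (u : EuclideanSpace ℝ (Fin n)) :
    ‖c • u‖⁻¹ • (c • u) = ‖u‖⁻¹ • u := by
  rw [norm_smul, smul_smul, Real.norm_eq_abs, abs_of_pos hc, mul_inv_rev, mul_assoc,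
    inv_mul_cancel₀ hc.ne', mul_one]

lemma gyroangle_scale₁ {X Y Y' Z : EuclideanSpace ℝ (Fin n)} {c : ℝ} (hc : 0 < c)
    (h : eadd s (-X) Y' = c • eadd s (-X) Y) :
    gyroangle s X Y' Z = gyroangle s X Y Z := by
  unfold gyroangle
  rw [h, smul_norm_inv_smul hc]

end Aux5

section Aux6

variable {n : ℕ}

lemma unit_combo {w w1 w2 : EuclideanSpace ℝ (Fin n)} {c1 c2 : ℝ}
    (hn1 : ‖w1‖ ≠ 0) (hn2 : ‖w2‖ ≠ 0) (h : w = c1 • w1 + c2 • w2) :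
    ‖w‖⁻¹ • w = (c1 * ‖w1‖ / ‖w‖) • (‖w1‖⁻¹ • w1) + (c2 * ‖w2‖ / ‖w‖) • (‖w2‖⁻¹ • w2) := by
  have key : ∀ W : EuclideanSpace ℝ (Fin n),
      ‖W‖⁻¹ • (c1 • w1 + c2 • w2)
        = (c1 * ‖w1‖ / ‖W‖) • (‖w1‖⁻¹ • w1) + (c2 * ‖w2‖ / ‖W‖) • (‖w2‖⁻¹ • w2) := by
    intro W
    match_scalars
    · field_simp
    · field_simp
  calc ‖w‖⁻¹ • w = ‖w‖⁻¹ • (c1 • w1 + c2 • w2) := by rw [← h]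
    _ = _ := key w

lemma arccos_split {u v m : EuclideanSpace ℝ (Fin n)} {c1 c2 : ℝ}
    (hu : ‖u‖ = 1) (hv : ‖v‖ = 1) (hm : ‖m‖ = 1)
    (hc1 : 0 < c1) (hc2 : 0 < c2) (h : m = c1 • u + c2 • v) :
    Real.arccos ⟪u, v⟫ = Real.arccos ⟪u, m⟫ + Real.arccos ⟪m, v⟫ := by
  have huu : ⟪u, u⟫ = 1 := by rw [real_inner_self_eq_norm_sq, hu]; norm_num
  have hvv : ⟪v, v⟫ = 1 := by rw [real_inner_self_eq_norm_sq, hv]; norm_num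
  have hzb : |⟪u, v⟫| ≤ 1 := by
    have := abs_real_inner_le_norm u v; rw [hu, hv] at this; simpa using this
  have hxb : |⟪u, m⟫| ≤ 1 := by
    have := abs_real_inner_le_norm u m; rw [hu, hm] at this; simpa using this
  have hyb : |⟪m, v⟫| ≤ 1 := by
    have := abs_real_inner_le_norm m v; rw [hm, hv] at this; simpa using this
  obtain ⟨z, hz⟩ : ∃ z : ℝ, ⟪u, v⟫ = z := ⟨_, rfl⟩
  have hx : ⟪u, m⟫ = c1 + c2 * z := by
    rw [h, inner_add_right, real_inner_smul_right, real_inner_smul_right, huu, hz]; ring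
  have hz' : ⟪v, u⟫ = z := by rw [real_inner_comm]; exact hz
  have hy : ⟪m, v⟫ = c1 * z + c2 := by
    rw [h, inner_add_left, real_inner_smul_left, real_inner_smul_left, hvv, hz]; ring
  have hcon : c1 ^ 2 + c2 ^ 2 + 2 * c1 * c2 * z = 1 := by
    have h1 : ⟪m, m⟫ = 1 := by rw [real_inner_self_eq_norm_sq, hm]; norm_num
    simp only [h, inner_add_left, inner_add_right, real_inner_smul_left,
      real_inner_smul_right, huu, hvv, hz, hz'] at h1
    linear_combination h1
  rw [hz] at hzb
  rw [hx] at hxb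
  rw [hy] at hyb
  have hz1 : -1 ≤ z := by cases abs_le.mp hzb; assumption
  have hz2 : z ≤ 1 := by cases abs_le.mp hzb; assumption
  have hx1 : -1 ≤ c1 + c2 * z := by cases abs_le.mp hxb; assumption
  have hx2 : c1 + c2 * z ≤ 1 := by cases abs_le.mp hxb; assumption
  have hy1 : -1 ≤ c1 * z + c2 := by cases abs_le.mp hyb; assumption
  have hy2 : c1 * z + c2 ≤ 1 := by cases abs_le.mp hyb; assumption
  have h1z : 0 ≤ 1 - z ^ 2 := by nlinarith
  have hsx : Real.sqrt (1 - (c1 + c2 * z) ^ 2) = c2 * Real.sqrt (1 - z ^ 2) := by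
    have e : 1 - (c1 + c2 * z) ^ 2 = c2 ^ 2 * (1 - z ^ 2) := by linear_combination -hcon
    rw [e, Real.sqrt_mul (sq_nonneg c2), Real.sqrt_sq hc2.le]
  have hsy : Real.sqrt (1 - (c1 * z + c2) ^ 2) = c1 * Real.sqrt (1 - z ^ 2) := by
    have e : 1 - (c1 * z + c2) ^ 2 = c1 ^ 2 * (1 - z ^ 2) := by linear_combination -hcon
    rw [e, Real.sqrt_mul (sq_nonneg c1), Real.sqrt_sq hc1.le]
  have hsum_le : Real.arccos (c1 + c2 * z) + Real.arccos (c1 * z + c2) ≤ Real.pi := by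
    have hneg : -(c1 * z + c2) ≤ c1 + c2 * z := by nlinarith
    have hanti : Real.arccos (c1 + c2 * z) ≤ Real.arccos (-(c1 * z + c2)) := by
      unfold Real.arccos
      have := Real.monotone_arcsin hneg
      linarith
    rw [Real.arccos_neg] at hanti
    linarith
  have hsum_ge : 0 ≤ Real.arccos (c1 + c2 * z) + Real.arccos (c1 * z + c2) :=
    add_nonneg (Real.arccos_nonneg _) (Real.arccos_nonneg _)
  have hcos : Real.cos (Real.arccos (c1 + c2 * z) + Real.arccos (c1 * z + c2)) = z := by
    rw [Real.cos_add, Real.cos_arccos hx1 hx2, Real.cos_arccos hy1 hy2,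
      Real.sin_arccos, Real.sin_arccos, hsx, hsy]
    have hss : Real.sqrt (1 - z ^ 2) * Real.sqrt (1 - z ^ 2) = 1 - z ^ 2 :=
      Real.mul_self_sqrt h1z
    linear_combination (-(c1*c2)) * hss + z * hcon
  rw [hz, hx, hy, ← Real.arccos_cos hsum_ge hsum_le, hcos]

end Aux6

set_option maxHeartbeats 1000000 in
/-- **Semi-Gyrocircle Gyrotriangle Theorem**: an inscribed gyroangle subtending a
gyrodiameter satisfies `α3 = α1 + α2`, i.e. `α3 + δ/2 = π/2`. -/
theorem semi_gyrocircle_gyrotriangle {n : ℕ} (hn : 2 ≤ n) (s : ℝ) (hs : 0 < s)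
    (O A1 A2 A3 : EuclideanSpace ℝ (Fin n)) (hO : ‖O‖ < s)
    (R : ℝ) (hRpos : 0 < R) (hRs : R < s)
    (hA1 : ‖A1‖ < s) (hA2 : ‖A2‖ < s) (hA3 : ‖A3‖ < s)
    (h12 : A1 ≠ A2) (h13 : A1 ≠ A3) (h23 : A2 ≠ A3)
    (hncol : ¬ Collinear ℝ ({A1, A2, A3} : Set (EuclideanSpace ℝ (Fin n))))
    (hR1 : ‖eadd s (-O) A1‖ = R) (hR2 : ‖eadd s (-O) A2‖ = R)
    (hR3 : ‖eadd s (-O) A3‖ = R)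
    (hbtw : Sbtw ℝ A1 O A2)
    (α1 α2 α3 δ : ℝ)
    (hα1 : α1 = gyroangle s A1 A2 A3)
    (hα2 : α2 = gyroangle s A2 A1 A3)
    (hα3 : α3 = gyroangle s A3 A1 A2)
    (hδ : δ = Real.pi - α1 - α2 - α3) :
    α3 = α1 + α2 ∧ α3 + δ / 2 = Real.pi / 2 := by
  -- extract the parameter of O on the segment A1 A2
  obtain ⟨t, htI, hOt⟩ := hbtw.mem_image_Ioo
  obtain ⟨ht0, ht1⟩ := htI
  rw [AffineMap.lineMap_apply_module'] at hOt
  have hO1 : O = A1 + t • (A2 - A1) := by rw [← hOt]; module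
  have hO2 : O = A2 + (1 - t) • (A1 - A2) := by rw [← hOt]; module
  have hs2 : (0:ℝ) < s ^ 2 := by positivity
  -- basic positivity of the D-factors
  have hD : ∀ X Y : EuclideanSpace ℝ (Fin n), ‖X‖ < s → ‖Y‖ < s →
      0 < 1 - ⟪X, Y⟫ / s ^ 2 := fun X Y hX hY => by
    rw [sub_pos, div_lt_one hs2]; exact inner_lt_s_sq hs hX hY
  -- norms of translated vectors
  have hn1O : ‖eadd s (-A1) O‖ = R := by rw [norm_eadd_symm hs hA1 hO]; exact hR1
  have hn2O : ‖eadd s (-A2) O‖ = R := by rw [norm_eadd_symm hs hA2 hO]; exact hR2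
  have hn3O : ‖eadd s (-A3) O‖ = R := by rw [norm_eadd_symm hs hA3 hO]; exact hR3
  -- step 1 : direction lemma at A1
  have h1P : ⟪A1, A1 + t • (A2 - A1)⟫ < s ^ 2 := by rw [← hO1]; exact inner_lt_s_sq hs hA1 hO
  have hco1 := eadd_combo hs t hA1 (inner_lt_s_sq hs hA1 hA1) (inner_lt_s_sq hs hA1 hA2) h1P
  rw [eadd_neg_self hs hA1, smul_zero, zero_add, ← hO1] at hco1
  have hc1pos : 0 < t * (1 - ⟪A1, A2⟫ / s ^ 2) / (1 - ⟪A1, O⟫ / s ^ 2) :=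
    div_pos (mul_pos ht0 (hD A1 A2 hA1 hA2)) (hD A1 O hA1 hO)
  have ang1 : gyroangle s A1 O A3 = gyroangle s A1 A2 A3 := gyroangle_scale₁ hc1pos hco1
  -- step 1' : direction lemma at A2
  have h2P : ⟪A2, A2 + (1 - t) • (A1 - A2)⟫ < s ^ 2 := by
    rw [← hO2]; exact inner_lt_s_sq hs hA2 hO
  have hco2 := eadd_combo hs (1 - t) hA2 (inner_lt_s_sq hs hA2 hA2) (inner_lt_s_sq hs hA2 hA1) h2P
  rw [eadd_neg_self hs hA2, smul_zero, zero_add, ← hO2] at hco2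
  have hc2pos : 0 < (1 - t) * (1 - ⟪A2, A1⟫ / s ^ 2) / (1 - ⟪A2, O⟫ / s ^ 2) :=
    div_pos (mul_pos (by linarith) (hD A2 A1 hA2 hA1)) (hD A2 O hA2 hO)
  have ang2 : gyroangle s A2 O A3 = gyroangle s A2 A1 A3 := gyroangle_scale₁ hc2pos hco2
  -- Gam facts
  have g13 : Gam s O A1 = Gam s O A3 := Gam_eq_of_norm_eq hs hO hA1 hO hA3 (hR1.trans hR3.symm)
  have g23 : Gam s O A2 = Gam s O A3 := Gam_eq_of_norm_eq hs hO hA2 hO hA3 (hR2.trans hR3.symm)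
  -- isosceles at (A1, A3)
  have iso13 : gyroangle s A1 O A3 = gyroangle s A3 O A1 := by
    have i1 := inner_eadd_eadd hs hA1 hO hA3
    have i3 := inner_eadd_eadd hs hA3 hO hA1
    have hGprod : Gam s A1 O * Gam s A1 A3 = Gam s A3 O * Gam s A3 A1 := by
      rw [Gam_comm s A1 O, Gam_comm s A3 O, Gam_comm s A3 A1, g13]
    have hPne : Gam s A1 O * Gam s A1 A3 ≠ 0 :=
      (mul_pos (Gam_pos hs hA1 hO) (Gam_pos hs hA1 hA3)).ne'
    have e_inner : ⟪eadd s (-A1) O, eadd s (-A1) A3⟫ = ⟪eadd s (-A3) O, eadd s (-A3) A1⟫ := by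
      apply mul_right_cancel₀ hPne
      calc ⟪eadd s (-A1) O, eadd s (-A1) A3⟫ * (Gam s A1 O * Gam s A1 A3)
          = s ^ 2 * (Gam s A1 O * Gam s A1 A3 - Gam s O A3) := i1
        _ = s ^ 2 * (Gam s A3 O * Gam s A3 A1 - Gam s O A1) := by rw [hGprod, ← g13]
        _ = ⟪eadd s (-A3) O, eadd s (-A3) A1⟫ * (Gam s A3 O * Gam s A3 A1) := i3.symm
        _ = ⟪eadd s (-A3) O, eadd s (-A3) A1⟫ * (Gam s A1 O * Gam s A1 A3) := by rw [hGprod]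
    have e_norm : ‖eadd s (-A1) O‖ * ‖eadd s (-A1) A3‖
        = ‖eadd s (-A3) O‖ * ‖eadd s (-A3) A1‖ := by
      rw [hn1O, hn3O, norm_eadd_symm hs hA1 hA3]
    rw [gyroangle_eq s A1 O A3, gyroangle_eq s A3 O A1, e_inner, e_norm]
  -- isosceles at (A2, A3)
  have iso23 : gyroangle s A2 O A3 = gyroangle s A3 O A2 := by
    have i1 := inner_eadd_eadd hs hA2 hO hA3
    have i3 := inner_eadd_eadd hs hA3 hO hA2
    have hGprod : Gam s A2 O * Gam s A2 A3 = Gam s A3 O * Gam s A3 A2 := by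
      rw [Gam_comm s A2 O, Gam_comm s A3 O, Gam_comm s A3 A2, g23]
    have hPne : Gam s A2 O * Gam s A2 A3 ≠ 0 :=
      (mul_pos (Gam_pos hs hA2 hO) (Gam_pos hs hA2 hA3)).ne'
    have e_inner : ⟪eadd s (-A2) O, eadd s (-A2) A3⟫ = ⟪eadd s (-A3) O, eadd s (-A3) A2⟫ := by
      apply mul_right_cancel₀ hPne
      calc ⟪eadd s (-A2) O, eadd s (-A2) A3⟫ * (Gam s A2 O * Gam s A2 A3)
          = s ^ 2 * (Gam s A2 O * Gam s A2 A3 - Gam s O A3) := i1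
        _ = s ^ 2 * (Gam s A3 O * Gam s A3 A2 - Gam s O A2) := by rw [hGprod, ← g23]
        _ = ⟪eadd s (-A3) O, eadd s (-A3) A2⟫ * (Gam s A3 O * Gam s A3 A2) := i3.symm
        _ = ⟪eadd s (-A3) O, eadd s (-A3) A2⟫ * (Gam s A2 O * Gam s A2 A3) := by rw [hGprod]
    have e_norm : ‖eadd s (-A2) O‖ * ‖eadd s (-A2) A3‖
        = ‖eadd s (-A3) O‖ * ‖eadd s (-A3) A2‖ := by
      rw [hn2O, hn3O, norm_eadd_symm hs hA2 hA3]
    rw [gyroangle_eq s A2 O A3, gyroangle_eq s A3 O A2, e_inner, e_norm]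
  -- splitting at A3
  have h3P : ⟪A3, A1 + t • (A2 - A1)⟫ < s ^ 2 := by rw [← hO1]; exact inner_lt_s_sq hs hA3 hO
  have hco3 := eadd_combo hs t hA3 (inner_lt_s_sq hs hA3 hA1) (inner_lt_s_sq hs hA3 hA2) h3P
  rw [← hO1] at hco3
  have hw31 : eadd s (-A3) A1 ≠ 0 := eadd_ne_zero hs hA3 hA1 h13.symm
  have hw32 : eadd s (-A3) A2 ≠ 0 := eadd_ne_zero hs hA3 hA2 h23.symm
  have hw3O : eadd s (-A3) O ≠ 0 := by
    intro h
    rw [h, norm_zero] at hn3O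
    exact hRpos.ne' hn3O.symm
  have hd1 := hD A3 A1 hA3 hA1
  have hd2 := hD A3 A2 hA3 hA2
  have hdO := hD A3 O hA3 hO
  have hb1pos : 0 < (1 - t) * (1 - ⟪A3, A1⟫ / s ^ 2) / (1 - ⟪A3, O⟫ / s ^ 2) :=
    div_pos (mul_pos (by linarith) hd1) hdO
  have hb2pos : 0 < t * (1 - ⟪A3, A2⟫ / s ^ 2) / (1 - ⟪A3, O⟫ / s ^ 2) :=
    div_pos (mul_pos ht0 hd2) hdO
  have hn1 : ‖eadd s (-A3) A1‖ ≠ 0 := norm_ne_zero_iff.mpr hw31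
  have hn2 : ‖eadd s (-A3) A2‖ ≠ 0 := norm_ne_zero_iff.mpr hw32
  have hm := unit_combo hn1 hn2 hco3
  have hb1pos' : 0 < ((1 - t) * (1 - ⟪A3, A1⟫ / s ^ 2) / (1 - ⟪A3, O⟫ / s ^ 2))
      * ‖eadd s (-A3) A1‖ / ‖eadd s (-A3) O‖ := by
    have := norm_pos_iff.mpr hw31
    have := norm_pos_iff.mpr hw3O
    positivity
  have hb2pos' : 0 < (t * (1 - ⟪A3, A2⟫ / s ^ 2) / (1 - ⟪A3, O⟫ / s ^ 2))
      * ‖eadd s (-A3) A2‖ / ‖eadd s (-A3) O‖ := by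
    have := norm_pos_iff.mpr hw32
    have := norm_pos_iff.mpr hw3O
    positivity
  have split := arccos_split (norm_smul_inv_norm (𝕜 := ℝ) hw31)
    (norm_smul_inv_norm (𝕜 := ℝ) hw32) (norm_smul_inv_norm (𝕜 := ℝ) hw3O)
    hb1pos' hb2pos' hm
  have key3 : gyroangle s A3 A1 A2 = gyroangle s A3 A1 O + gyroangle s A3 O A2 := by
    unfold gyroangle
    exact split
  -- assemble
  have hα1' : gyroangle s A3 A1 O = α1 := by
    rw [gyroangle_comm, ← iso13, ang1, hα1]
  have hα2' : gyroangle s A3 O A2 = α2 := by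
    rw [← iso23, ang2, hα2]
  have hmain : α3 = α1 + α2 := by rw [hα3, key3, hα1', hα2']
  exact ⟨hmain, by rw [hδ]; linarith [hmain]⟩
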